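/- For each s ∈ ℕ let (T_s, W_s) be a random vector in ℝ^d × ℝ^b defined on a probability space (Ω_s, P_s), and suppose (T_s, W_s) converges in distribution to a random vector (T, W) on a probability space (Ω, P). Let ℓ* : ℝ^d → [1, ∞) be continuous, and assume that for every unit vector u ∈ ℝ^b one has P(u·W > 0) > 0. Then liminf_{s→∞} inf_{β ∈ ℝ^b} E_{P_s}[ ℓ*(T_s) exp(β·W_s) ] ≥ inf_{β ∈ ℝ^b} E_P[ ℓ*(T) exp(β·W) ], where all expectations of nonnegative functions are valued in [0, +∞]. -/

import Mathlib

open MeasureTheory Filter Topology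

namespace LiminfAux

noncomputable def q (x : ℝ) : ℝ := max 0 (min 1 x)

lemma q_nonneg (x : ℝ) : 0 ≤ q x := le_max_left _ _
lemma q_le_one (x : ℝ) : q x ≤ 1 := max_le zero_le_one (min_le_left _ _)
lemma q_continuous : Continuous q := continuous_const.max (continuous_const.min continuous_id)
lemma q_mono : Monotone q := fun x y h => max_le_max le_rfl (min_le_min le_rfl h)
lemma q_eq_one {x : ℝ} (h : 1 ≤ x) : q x = 1 := by
  unfold q; rw [min_eq_left h, max_eq_right zero_le_one]
lemma q_eq_zero {x : ℝ} (h : x ≤ 0) : q x = 0 := by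
  unfold q; rw [min_eq_right (h.trans zero_le_one), max_eq_left h]
lemma pos_of_q_pos {x : ℝ} (h : 0 < q x) : 0 < x := by
  by_contra hx; push_neg at hx; rw [q_eq_zero hx] at h; exact lt_irrefl _ h

lemma integrable_comp {α : Type*} [MeasurableSpace α] (μ : Measure α) [IsFiniteMeasure μ]
    {g : α → ℝ} (hg : Measurable g) (C : ℝ) (h0 : ∀ x, 0 ≤ g x) (hC : ∀ x, g x ≤ C) :
    Integrable g μ :=
  (integrable_const C).mono' hg.aestronglyMeasurable
    (ae_of_all _ fun x => by rw [Real.norm_eq_abs, abs_of_nonneg (h0 x)]; exact hC x)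

lemma lintegral_ofReal_eq {α : Type*} [MeasurableSpace α] (μ : Measure α) [IsFiniteMeasure μ]
    {g : α → ℝ} (hg : Measurable g) (C : ℝ) (h0 : ∀ x, 0 ≤ g x) (hC : ∀ x, g x ≤ C) :
    ∫⁻ x, ENNReal.ofReal (g x) ∂μ = ENNReal.ofReal (∫ x, g x ∂μ) :=
  (ofReal_integral_eq_lintegral_ofReal (integrable_comp μ hg C h0 hC) (ae_of_all _ h0)).symm

lemma abs_dot_le {b : ℕ} (a w : Fin b → ℝ) {C : ℝ} (hw : ‖w‖ ≤ C) :
    |∑ j, a j * w j| ≤ (b : ℝ) * ‖a‖ * C := by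
  have hC : 0 ≤ C := (norm_nonneg w).trans hw
  calc |∑ j, a j * w j| ≤ ∑ j, |a j * w j| := Finset.abs_sum_le_sum_abs _ _
    _ ≤ ∑ _j : Fin b, ‖a‖ * C := Finset.sum_le_sum fun j _ => by
        rw [abs_mul]
        exact mul_le_mul (by simpa [Real.norm_eq_abs] using norm_le_pi_norm a j)
          ((by simpa [Real.norm_eq_abs] using norm_le_pi_norm w j : |w j| ≤ ‖w‖).trans hw)
          (abs_nonneg _) (norm_nonneg _)
    _ = (b : ℝ) * ‖a‖ * C := by
        rw [Finset.sum_const, Finset.card_univ, Fintype.card_fin, nsmul_eq_mul]; ring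

lemma dot_le {b : ℕ} (a w : Fin b → ℝ) {C : ℝ} (hw : ‖w‖ ≤ C) :
    ∑ j, a j * w j ≤ (b : ℝ) * ‖a‖ * C :=
  (le_abs_self _).trans (abs_dot_le a w hw)
end LiminfAux

open LiminfAux

set_option maxHeartbeats 2000000 in
/-- **Lower semicontinuity of the dual objective along convergence in distribution**
(Lemma `fixed-h-liminf`).  Suppose random vectors `(T_s, W_s)` on probability spaces
`(Ω_s, P_s)` converge in distribution to `(T, W)` on `(Ω, P)`, `ℓ* ≥ 1` is continuous,
and for every unit vector `u ∈ ℝ^b` one has `P(u·W > 0) > 0`.  Then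
`liminf_s inf_β E_{P_s}[ℓ*(T_s) exp(β·W_s)] ≥ inf_β E_P[ℓ*(T) exp(β·W)]`
(expectations of nonnegative functions valued in `[0, +∞]`). -/
theorem liminf_inf_beta_exponential
    (d b : ℕ)
    (Ωs : ℕ → Type*) [∀ s, MeasurableSpace (Ωs s)]
    (Ps : ∀ s, Measure (Ωs s)) [∀ s, IsProbabilityMeasure (Ps s)]
    (T : ∀ s, Ωs s → Fin d → ℝ) (W : ∀ s, Ωs s → Fin b → ℝ)
    (hTW : ∀ s, Measurable (fun ω => (T s ω, W s ω)))
    {Ω : Type*} [MeasurableSpace Ω] (P : Measure Ω) [IsProbabilityMeasure P]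
    (T₀ : Ω → Fin d → ℝ) (W₀ : Ω → Fin b → ℝ)
    (hTW₀ : Measurable (fun ω => (T₀ ω, W₀ ω)))
    (hconv : ∀ f : ((Fin d → ℝ) × (Fin b → ℝ)) → ℝ, Continuous f →
      (∃ C : ℝ, ∀ z, |f z| ≤ C) →
      Tendsto (fun s => ∫ ω, f (T s ω, W s ω) ∂(Ps s)) atTop
        (nhds (∫ ω, f (T₀ ω, W₀ ω) ∂P)))
    (ℓstar : (Fin d → ℝ) → ℝ) (hℓcont : Continuous ℓstar) (hℓ1 : ∀ u, 1 ≤ ℓstar u)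
    (hW : ∀ u : Fin b → ℝ, (∑ j, (u j) ^ 2 = 1) →
      0 < P {ω | 0 < ∑ j, u j * W₀ ω j}) :
    (⨅ β : Fin b → ℝ,
        ∫⁻ ω, ENNReal.ofReal (ℓstar (T₀ ω) * Real.exp (∑ j, β j * W₀ ω j)) ∂P)
      ≤ liminf (fun s => ⨅ β : Fin b → ℝ,
          ∫⁻ ω, ENNReal.ofReal (ℓstar (T s ω) * Real.exp (∑ j, β j * W s ω j)) ∂(Ps s))
          atTop := by
  classical
  by_contra hcon
  push_neg at hcon
  obtain ⟨c, hc1, hc2⟩ := exists_between hcon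
  have hcne : c ≠ ⊤ := hc2.ne_top
  have hfreq : ∃ᶠ s in atTop, (⨅ β : Fin b → ℝ,
      ∫⁻ ω, ENNReal.ofReal (ℓstar (T s ω) * Real.exp (∑ j, β j * W s ω j)) ∂(Ps s)) < c :=
    frequently_lt_of_liminf_lt (by isBoundedDefault) hc1
  obtain ⟨φ, hφmono, hφlt⟩ := extraction_of_frequently_atTop hfreq
  have hchoice : ∀ k, ∃ βk : Fin b → ℝ,
      ∫⁻ ω, ENNReal.ofReal (ℓstar (T (φ k) ω) * Real.exp (∑ j, βk j * W (φ k) ω j))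
        ∂(Ps (φ k)) < c := fun k => iInf_lt_iff.mp (hφlt k)
  choose β hβ using hchoice
  by_cases hbdd : ∃ R, ∀ k, ‖β k‖ ≤ R
  · obtain ⟨R, hR⟩ := hbdd
    have hmem : ∀ k, β k ∈ Metric.closedBall (0 : Fin b → ℝ) R := fun k =>
      mem_closedBall_zero_iff.mpr (hR k)
    obtain ⟨βs, -, ψ, hψmono, hβlim⟩ :=
      (isCompact_closedBall (0 : Fin b → ℝ) R).tendsto_subseq hmem
    set g : ((Fin d → ℝ) × (Fin b → ℝ)) → ℝ :=
      fun z => ℓstar z.1 * Real.exp (∑ j, βs j * z.2 j) with hgdef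
    have hg0 : ∀ z, 0 < g z := fun z =>
      mul_pos (lt_of_lt_of_le one_pos (hℓ1 _)) (Real.exp_pos _)
    have hsumcont : ∀ γ : Fin b → ℝ,
        Continuous (fun z : ((Fin d → ℝ) × (Fin b → ℝ)) => ∑ j, γ j * z.2 j) := fun γ =>
      continuous_finset_sum _ fun j _ =>
        continuous_const.mul ((continuous_apply j).comp continuous_snd)
    have hgcont : Continuous g := (hℓcont.comp continuous_fst).mul
      (Real.continuous_exp.comp (hsumcont βs))
    set h : ℕ → ((Fin d → ℝ) × (Fin b → ℝ)) → ℝ :=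
      fun n z => min (g z) (n : ℝ) * q (((n : ℝ) + 1) - ‖z.2‖) with hhdef
    have hhcont : ∀ n, Continuous (h n) := fun n =>
      (hgcont.min continuous_const).mul
        (q_continuous.comp (continuous_const.sub continuous_snd.norm))
    have hh0 : ∀ n z, 0 ≤ h n z := fun n z =>
      mul_nonneg (le_min (hg0 z).le (Nat.cast_nonneg n)) (q_nonneg _)
    have hhC : ∀ n z, h n z ≤ n := fun n z =>
      (mul_le_of_le_one_right (le_min (hg0 z).le (Nat.cast_nonneg n)) (q_le_one _)).trans
        (min_le_right _ _)
    have hmeas0 : ∀ n, Measurable fun ω : Ω => h n (T₀ ω, W₀ ω) := fun n =>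
      (hhcont n).measurable.comp hTW₀
    have hhg : ∀ n z, h n z ≤ g z := fun n z =>
      (mul_le_of_le_one_right (le_min (hg0 z).le (Nat.cast_nonneg n)) (q_le_one _)).trans
        (min_le_left _ _)
    -- Step A
    have stepA : ∀ n : ℕ, ENNReal.ofReal (∫ ω, h n (T₀ ω, W₀ ω) ∂P) ≤ c := by
      intro n
      have hnorm0 : Tendsto (fun k => ‖βs - β (ψ k)‖) atTop (𝓝 0) := by
        have h0 : Tendsto (fun k => βs - β (ψ k)) atTop (𝓝 (βs - βs)) := by
          exact Tendsto.sub tendsto_const_nhds hβlim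
        simpa using h0.norm
      have harg : Tendsto (fun k => (b : ℝ) * ‖βs - β (ψ k)‖ * ((n : ℝ) + 1)) atTop (𝓝 0) := by
        have := (hnorm0.const_mul (b : ℝ)).mul_const ((n : ℝ) + 1)
        simpa using this
      have hexp : Tendsto (fun k => Real.exp ((b : ℝ) * ‖βs - β (ψ k)‖ * ((n : ℝ) + 1)))
          atTop (𝓝 1) := by
        have := (Real.continuous_exp.tendsto 0).comp harg
        simpa [Function.comp_def] using this
      have tendR : Tendsto (fun k =>
          ENNReal.ofReal (Real.exp ((b : ℝ) * ‖βs - β (ψ k)‖ * ((n : ℝ) + 1))) * c)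
          atTop (𝓝 c) := by
        have h1 : Tendsto (fun k =>
            ENNReal.ofReal (Real.exp ((b : ℝ) * ‖βs - β (ψ k)‖ * ((n : ℝ) + 1))))
            atTop (𝓝 1) := by
          have := (ENNReal.continuous_ofReal.tendsto 1).comp hexp
          simpa [Function.comp_def] using this
        simpa using ENNReal.Tendsto.mul_const h1 (Or.inr hcne)
      have tendL : Tendsto (fun k =>
          ENNReal.ofReal (∫ ω, h n (T (φ (ψ k)) ω, W (φ (ψ k)) ω) ∂(Ps (φ (ψ k)))))
          atTop (𝓝 (ENNReal.ofReal (∫ ω, h n (T₀ ω, W₀ ω) ∂P))) := by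
        have hb : ∃ C : ℝ, ∀ z, |h n z| ≤ C :=
          ⟨n, fun z => by rw [abs_of_nonneg (hh0 n z)]; exact hhC n z⟩
        exact (ENNReal.continuous_ofReal.tendsto _).comp
          ((hconv (h n) (hhcont n) hb).comp (hφmono.comp hψmono).tendsto_atTop)
      refine le_of_tendsto_of_tendsto' tendL tendR fun k => ?_
      have hpt : ∀ z : ((Fin d → ℝ) × (Fin b → ℝ)),
          h n z ≤ Real.exp ((b : ℝ) * ‖βs - β (ψ k)‖ * ((n : ℝ) + 1)) *
            (ℓstar z.1 * Real.exp (∑ j, β (ψ k) j * z.2 j)) := by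
        intro z
        by_cases hwn : ‖z.2‖ ≤ (n : ℝ) + 1
        · have hsum : ∑ j, βs j * z.2 j
              = ∑ j, β (ψ k) j * z.2 j + ∑ j, (βs j - β (ψ k) j) * z.2 j := by
            rw [← Finset.sum_add_distrib]
            exact Finset.sum_congr rfl fun j _ => by ring
          have hdot : ∑ j, (βs j - β (ψ k) j) * z.2 j
              ≤ (b : ℝ) * ‖βs - β (ψ k)‖ * ((n : ℝ) + 1) := by
            have := dot_le (βs - β (ψ k)) z.2 hwn
            simpa using this
          have h2 : g z = (ℓstar z.1 * Real.exp (∑ j, β (ψ k) j * z.2 j)) *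
              Real.exp (∑ j, (βs j - β (ψ k) j) * z.2 j) := by
            simp only [hgdef]
            rw [hsum, Real.exp_add]; ring
          calc h n z ≤ g z := hhg n z
            _ = (ℓstar z.1 * Real.exp (∑ j, β (ψ k) j * z.2 j)) *
                Real.exp (∑ j, (βs j - β (ψ k) j) * z.2 j) := h2
            _ ≤ (ℓstar z.1 * Real.exp (∑ j, β (ψ k) j * z.2 j)) *
                Real.exp ((b : ℝ) * ‖βs - β (ψ k)‖ * ((n : ℝ) + 1)) :=
                mul_le_mul_of_nonneg_left (Real.exp_le_exp.mpr hdot)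
                  (mul_nonneg (zero_le_one.trans (hℓ1 _)) (Real.exp_pos _).le)
            _ = _ := mul_comm _ _
        · have hz : h n z = 0 := by
            simp only [hhdef]
            rw [q_eq_zero (by linarith), mul_zero]
          rw [hz]
          exact mul_nonneg (Real.exp_pos _).le
            (mul_nonneg (zero_le_one.trans (hℓ1 _)) (Real.exp_pos _).le)
      have hmeasg : Measurable (fun ω => ℓstar (T (φ (ψ k)) ω) *
          Real.exp (∑ j, β (ψ k) j * W (φ (ψ k)) ω j)) :=
        (((hℓcont.comp continuous_fst).mul
          (Real.continuous_exp.comp (hsumcont (β (ψ k))))).measurable).comp (hTW _)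
      calc ENNReal.ofReal (∫ ω, h n (T (φ (ψ k)) ω, W (φ (ψ k)) ω) ∂(Ps (φ (ψ k))))
          = ∫⁻ ω, ENNReal.ofReal (h n (T (φ (ψ k)) ω, W (φ (ψ k)) ω)) ∂(Ps (φ (ψ k))) :=
            (lintegral_ofReal_eq _ ((hhcont n).measurable.comp (hTW _)) n
              (fun ω => hh0 n _) (fun ω => hhC n _)).symm
        _ ≤ ∫⁻ ω, ENNReal.ofReal (Real.exp ((b : ℝ) * ‖βs - β (ψ k)‖ * ((n : ℝ) + 1)))
              * ENNReal.ofReal (ℓstar (T (φ (ψ k)) ω) *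
                Real.exp (∑ j, β (ψ k) j * W (φ (ψ k)) ω j)) ∂(Ps (φ (ψ k))) := by
            refine lintegral_mono fun ω => ?_
            rw [← ENNReal.ofReal_mul (Real.exp_pos _).le]
            exact ENNReal.ofReal_le_ofReal (hpt _)
        _ = ENNReal.ofReal (Real.exp ((b : ℝ) * ‖βs - β (ψ k)‖ * ((n : ℝ) + 1)))
              * ∫⁻ ω, ENNReal.ofReal (ℓstar (T (φ (ψ k)) ω) *
                Real.exp (∑ j, β (ψ k) j * W (φ (ψ k)) ω j)) ∂(Ps (φ (ψ k))) :=
            lintegral_const_mul _ hmeasg.ennreal_ofReal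
        _ ≤ ENNReal.ofReal (Real.exp ((b : ℝ) * ‖βs - β (ψ k)‖ * ((n : ℝ) + 1))) * c :=
            mul_le_mul_right (hβ (ψ k)).le _
    -- Step B
    have hsup : ∀ ω : Ω, ENNReal.ofReal (g (T₀ ω, W₀ ω))
        = ⨆ n, ENNReal.ofReal (h n (T₀ ω, W₀ ω)) := by
      intro ω
      refine le_antisymm ?_ (iSup_le fun n => ENNReal.ofReal_le_ofReal (hhg n _))
      obtain ⟨N, hN⟩ := exists_nat_ge (max (g (T₀ ω, W₀ ω)) ‖W₀ ω‖)
      have h1 : g (T₀ ω, W₀ ω) ≤ N := (le_max_left _ _).trans hN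
      have h2 : ‖W₀ ω‖ ≤ N := (le_max_right _ _).trans hN
      have hNe : h N (T₀ ω, W₀ ω) = g (T₀ ω, W₀ ω) := by
        simp only [hhdef]
        rw [min_eq_left h1, q_eq_one (by linarith), mul_one]
      exact le_iSup_of_le N (le_of_eq (by rw [hNe]))
    have hmono : Monotone (fun n (ω : Ω) => ENNReal.ofReal (h n (T₀ ω, W₀ ω))) := by
      intro m n hmn ω
      apply ENNReal.ofReal_le_ofReal
      have hcast : (m : ℝ) ≤ (n : ℝ) := Nat.cast_le.mpr hmn
      simp only [hhdef]
      exact mul_le_mul (min_le_min le_rfl hcast) (q_mono (by linarith)) (q_nonneg _)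
        (le_min (hg0 _).le (Nat.cast_nonneg n))
    have hFle : (⨅ β' : Fin b → ℝ,
        ∫⁻ ω, ENNReal.ofReal (ℓstar (T₀ ω) * Real.exp (∑ j, β' j * W₀ ω j)) ∂P) ≤ c := by
      refine le_trans (iInf_le _ βs) ?_
      have heq : ∫⁻ ω, ENNReal.ofReal (ℓstar (T₀ ω) * Real.exp (∑ j, βs j * W₀ ω j)) ∂P
          = ⨆ n, ∫⁻ ω, ENNReal.ofReal (h n (T₀ ω, W₀ ω)) ∂P := by
        rw [← lintegral_iSup (fun n => (hmeas0 n).ennreal_ofReal) hmono]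
        exact lintegral_congr fun ω => hsup ω
      rw [heq]
      refine iSup_le fun n => ?_
      rw [lintegral_ofReal_eq P (hmeas0 n) n (fun ω => hh0 n _) (fun ω => hhC n _)]
      exact stepA n
    exact absurd hFle (not_le.mpr hc2)
  · push_neg at hbdd
    set v : ℕ → ℝ := fun k => Real.sqrt (∑ j, (β k j) ^ 2) with hvdef
    have hv : ∀ k, ‖β k‖ ≤ v k := by
      intro k
      rw [pi_norm_le_iff_of_nonneg (Real.sqrt_nonneg _)]
      intro j
      rw [Real.norm_eq_abs, ← Real.sqrt_sq_eq_abs]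
      exact Real.sqrt_le_sqrt (Finset.single_le_sum (f := fun j => (β k j) ^ 2)
        (fun i _ => sq_nonneg _) (Finset.mem_univ j))
    have hfreq2 : ∀ n : ℕ, ∃ᶠ k in atTop, (n : ℝ) + 1 ≤ v k := by
      intro n
      rw [frequently_atTop]
      intro a
      obtain ⟨k, hk⟩ := hbdd ((n : ℝ) + 1 + ∑ j ∈ Finset.range a, ‖β j‖)
      have hsum0 : (0:ℝ) ≤ ∑ j ∈ Finset.range a, ‖β j‖ :=
        Finset.sum_nonneg fun j _ => norm_nonneg _
      have hka : a ≤ k := by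
        by_contra hka
        push_neg at hka
        have : ‖β k‖ ≤ ∑ j ∈ Finset.range a, ‖β j‖ :=
          Finset.single_le_sum (f := fun j => ‖β j‖) (fun j _ => norm_nonneg (β j))
            (Finset.mem_range.mpr hka)
        linarith
      exact ⟨k, hka, by linarith [hv k]⟩
    obtain ⟨ψ, hψmono, hψv⟩ := extraction_forall_of_frequently hfreq2
    have hvpos : ∀ m, 0 < v (ψ m) := fun m => lt_of_lt_of_le (by positivity) (hψv m)
    set u' : ℕ → Fin b → ℝ := fun m j => β (ψ m) j / v (ψ m) with hu'def
    have hu'S : ∀ m, ∑ j, (u' m j) ^ 2 = 1 := by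
      intro m
      have hsq : v (ψ m) ^ 2 = ∑ j, (β (ψ m) j) ^ 2 := Real.sq_sqrt (by positivity)
      have hstep : ∀ j : Fin b, (u' m j) ^ 2 = (β (ψ m) j) ^ 2 / v (ψ m) ^ 2 := fun j => by
        simp only [hu'def]; rw [div_pow]
      rw [Finset.sum_congr rfl fun j _ => hstep j, ← Finset.sum_div, ← hsq]
      exact div_self (pow_ne_zero _ (hvpos m).ne')
    have hScpt : IsCompact {u : Fin b → ℝ | ∑ j, (u j) ^ 2 = 1} := by
      apply Metric.isCompact_of_isClosed_isBounded
      · exact isClosed_eq (continuous_finset_sum _ fun j _ => (continuous_apply j).pow 2)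
          continuous_const
      · apply Bornology.IsBounded.subset (Metric.isBounded_closedBall (x := (0 : Fin b → ℝ)) (r := 1))
        intro u hu
        rw [Metric.mem_closedBall, dist_zero_right, pi_norm_le_iff_of_nonneg zero_le_one]
        intro j
        rw [Real.norm_eq_abs]
        have h1 : (u j) ^ 2 ≤ 1 := by
          have h2 : (u j) ^ 2 ≤ ∑ i, (u i) ^ 2 := Finset.single_le_sum (f := fun j => (u j) ^ 2)
            (fun i _ => sq_nonneg _) (Finset.mem_univ j)
          have h3 : ∑ j, (u j) ^ 2 = 1 := hu
          linarith
        nlinarith [abs_nonneg (u j), sq_abs (u j)]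
    obtain ⟨u, huS, ψ₂, hψ₂mono, hulim⟩ := hScpt.tendsto_subseq hu'S
    have hPu := hW u huS
    set A : ℕ → Set Ω :=
      fun n => {ω | 1 / ((n : ℝ) + 1) ≤ ∑ j, u j * W₀ ω j ∧ ‖W₀ ω‖ ≤ n} with hAdef
    have hWmeas : Measurable W₀ := measurable_snd.comp hTW₀
    have hdotmeas : Measurable (fun ω => ∑ j, u j * W₀ ω j) :=
      Finset.measurable_sum _ fun j _ => measurable_const.mul ((measurable_pi_apply j).comp hWmeas)
    have hsub : {ω | 0 < ∑ j, u j * W₀ ω j} ⊆ ⋃ n, A n := by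
      intro ω hω
      simp only [Set.mem_setOf_eq] at hω
      obtain ⟨n, hn⟩ := exists_nat_ge (max (1 / (∑ j, u j * W₀ ω j)) ‖W₀ ω‖)
      refine Set.mem_iUnion.mpr ⟨n, ?_, (le_max_right _ _).trans hn⟩
      have h1 : 1 / (∑ j, u j * W₀ ω j) ≤ (n : ℝ) + 1 :=
        ((le_max_left _ _).trans hn).trans (by linarith)
      calc 1 / ((n:ℝ)+1) ≤ 1 / (1 / (∑ j, u j * W₀ ω j)) :=
            one_div_le_one_div_of_le (by positivity) h1
        _ = ∑ j, u j * W₀ ω j := one_div_one_div _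
    have hAex : ∃ n, P (A n) ≠ 0 := by
      by_contra hA0
      push_neg at hA0
      have hz : P {ω | 0 < ∑ j, u j * W₀ ω j} = 0 :=
        le_antisymm (le_trans (measure_mono hsub) (le_of_eq (measure_iUnion_null hA0)))
          zero_le
      rw [hz] at hPu; exact lt_irrefl _ hPu
    obtain ⟨n, hAn⟩ := hAex
    have ha' : 0 < (P (A n)).toReal := ENNReal.toReal_pos hAn (measure_ne_top _ _)
    set a' := (P (A n)).toReal with ha'def
    set f : ((Fin d → ℝ) × (Fin b → ℝ)) → ℝ :=
      fun z => q (2 * ((n : ℝ) + 1) * (∑ j, u j * z.2 j) - 1) * q (((n : ℝ) + 1) - ‖z.2‖)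
      with hfdef
    have hsumcont : Continuous (fun z : ((Fin d → ℝ) × (Fin b → ℝ)) => ∑ j, u j * z.2 j) :=
      continuous_finset_sum _ fun j _ =>
        continuous_const.mul ((continuous_apply j).comp continuous_snd)
    have hfcont : Continuous f :=
      (q_continuous.comp ((continuous_const.mul hsumcont).sub continuous_const)).mul
        (q_continuous.comp (continuous_const.sub continuous_snd.norm))
    have hf0 : ∀ z, 0 ≤ f z := fun z => mul_nonneg (q_nonneg _) (q_nonneg _)
    have hf1 : ∀ z, f z ≤ 1 := fun z => mul_le_one₀ (q_le_one _) (q_nonneg _) (q_le_one _)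
    have hfA : ∀ ω ∈ A n, f (T₀ ω, W₀ ω) = 1 := by
      intro ω hω
      obtain ⟨h1, h2⟩ := hω
      have hn1 : (0:ℝ) < (n:ℝ) + 1 := by positivity
      have e1 : (1:ℝ) ≤ 2 * ((n:ℝ)+1) * (∑ j, u j * W₀ ω j) - 1 := by
        have e2 : (1:ℝ) ≤ ((n:ℝ)+1) * (∑ j, u j * W₀ ω j) := by
          calc (1:ℝ) = ((n:ℝ)+1) * (1/((n:ℝ)+1)) := by field_simp
            _ ≤ ((n:ℝ)+1) * (∑ j, u j * W₀ ω j) := mul_le_mul_of_nonneg_left h1 hn1.le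
        linarith
      simp only [hfdef]
      rw [q_eq_one e1, q_eq_one (by linarith : (1:ℝ) ≤ ((n:ℝ)+1) - ‖W₀ ω‖), mul_one]
    have hAmeas : MeasurableSet (A n) := by
      have heq : A n
          = {ω : Ω | 1 / ((n : ℝ) + 1) ≤ ∑ j, u j * W₀ ω j} ∩ {ω : Ω | ‖W₀ ω‖ ≤ n} := by
        simp only [hAdef]
        exact Set.setOf_and
      rw [heq]
      exact (measurableSet_le measurable_const hdotmeas).inter
        (measurableSet_le hWmeas.norm measurable_const)
    have hfmeas0 : Measurable (fun ω : Ω => f (T₀ ω, W₀ ω)) := hfcont.measurable.comp hTW₀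
    have hIntf : Integrable (fun ω => f (T₀ ω, W₀ ω)) P :=
      integrable_comp P hfmeas0 1 (fun ω => hf0 _) (fun ω => hf1 _)
    have hInt : a' ≤ ∫ ω, f (T₀ ω, W₀ ω) ∂P := by
      calc a' = ∫ _ω in A n, (1:ℝ) ∂P := by rw [setIntegral_const, smul_eq_mul, mul_one]; rfl
        _ = ∫ ω in A n, f (T₀ ω, W₀ ω) ∂P :=
            setIntegral_congr_fun hAmeas fun ω hω => (hfA ω hω).symm
        _ ≤ ∫ ω, f (T₀ ω, W₀ ω) ∂P :=
            setIntegral_le_integral hIntf (ae_of_all _ fun ω => hf0 _)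
    have htendf := hconv f hfcont ⟨1, fun z => abs_le.mpr ⟨by linarith [hf0 z], hf1 z⟩⟩
    have hev : ∀ᶠ s in atTop, a' / 2 < ∫ ω, f (T s ω, W s ω) ∂(Ps s) :=
      htendf.eventually (eventually_gt_nhds (by linarith))
    obtain ⟨S₀, hS₀⟩ := eventually_atTop.mp hev
    set δ : ℝ := 1 / (2 * ((n : ℝ) + 1)) with hδdef
    have hδ : 0 < δ := by positivity
    have hfpos : ∀ z : ((Fin d → ℝ) × (Fin b → ℝ)), 0 < f z →
        δ ≤ ∑ j, u j * z.2 j ∧ ‖z.2‖ ≤ (n : ℝ) + 1 := by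
      intro z hz
      have hq1 : 0 < q (2 * ((n:ℝ)+1) * (∑ j, u j * z.2 j) - 1) := by
        rcases mul_pos_iff.mp hz with ⟨h1, _⟩ | ⟨h1, _⟩
        · exact h1
        · exact absurd h1 (not_lt.mpr (q_nonneg _))
      have hq2 : 0 < q (((n:ℝ)+1) - ‖z.2‖) := by
        rcases mul_pos_iff.mp hz with ⟨_, h2⟩ | ⟨h1, _⟩
        · exact h2
        · exact absurd h1 (not_lt.mpr (q_nonneg _))
      constructor
      · have h3 := pos_of_q_pos hq1
        rw [hδdef, div_le_iff₀ (by positivity)]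
        nlinarith
      · linarith [pos_of_q_pos hq2]
    set ρ : ℝ := δ / (2 * ((b : ℝ) * ((n : ℝ) + 1) + 1)) with hρdef
    have hρ : 0 < ρ := by positivity
    obtain ⟨N₁, hN₁⟩ := Metric.tendsto_atTop.mp hulim ρ hρ
    have hexp : Tendsto (fun m : ℕ => Real.exp (((m : ℝ) + 1) * (δ / 2)) * (a' / 2))
        atTop atTop := by
      apply Tendsto.atTop_mul_const (by linarith : (0:ℝ) < a'/2)
      apply Real.tendsto_exp_atTop.comp
      apply Tendsto.atTop_mul_const (by linarith : (0:ℝ) < δ/2)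
      exact tendsto_atTop_add_const_right _ _ tendsto_natCast_atTop_atTop
    obtain ⟨M₂, hM₂⟩ := eventually_atTop.mp (hexp.eventually_ge_atTop (c.toReal + 1))
    set m := max (max S₀ N₁) M₂ with hmdef
    have hm1 : m ≤ ψ₂ m := hψ₂mono.le_apply
    have hm2 : ψ₂ m ≤ ψ (ψ₂ m) := hψmono.le_apply
    have hm3 : ψ (ψ₂ m) ≤ φ (ψ (ψ₂ m)) := hφmono.le_apply
    have hsS₀ : S₀ ≤ φ (ψ (ψ₂ m)) := by
      have : S₀ ≤ m := le_trans (le_max_left _ _) (le_max_left _ _)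
      omega
    have hdistm : dist ((u' ∘ ψ₂) m) u < ρ := hN₁ m (le_trans (le_max_right _ _) (le_max_left _ _))
    have hΔ : ‖u' (ψ₂ m) - u‖ ≤ ρ := by
      rw [← dist_eq_norm]
      exact hdistm.le
    have hptwise : ∀ z : ((Fin d → ℝ) × (Fin b → ℝ)),
        Real.exp (v (ψ (ψ₂ m)) * (δ/2)) * f z
          ≤ ℓstar z.1 * Real.exp (∑ j, β (ψ (ψ₂ m)) j * z.2 j) := by
      intro z
      rcases eq_or_lt_of_le (hf0 z) with hfz | hfz
      · rw [← hfz, mul_zero]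
        exact mul_nonneg (zero_le_one.trans (hℓ1 _)) (Real.exp_pos _).le
      · obtain ⟨hdot, hwn⟩ := hfpos z hfz
        have habs : |∑ j, (u' (ψ₂ m) j - u j) * z.2 j| ≤ δ / 2 := by
          have h1 := abs_dot_le (u' (ψ₂ m) - u) z.2 hwn
          have h2 : (b:ℝ) * ‖u' (ψ₂ m) - u‖ * ((n:ℝ)+1) ≤ ((b:ℝ) * ((n:ℝ)+1)) * ρ := by
            calc (b:ℝ) * ‖u' (ψ₂ m) - u‖ * ((n:ℝ)+1)
                = ((b:ℝ) * ((n:ℝ)+1)) * ‖u' (ψ₂ m) - u‖ := by ring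
              _ ≤ ((b:ℝ) * ((n:ℝ)+1)) * ρ := mul_le_mul_of_nonneg_left hΔ (by positivity)
          have h3 : ((b:ℝ) * ((n:ℝ)+1)) * ρ ≤ δ / 2 := by
            rw [hρdef]
            set x := (b:ℝ) * ((n:ℝ)+1) with hxdef
            have hx : 0 ≤ x := by positivity
            have h4 : x / (2*(x+1)) ≤ 1/2 := by
              rw [div_le_div_iff₀ (by positivity) (by norm_num : (0:ℝ) < 2)]
              linarith
            calc x * (δ / (2*(x+1))) = δ * (x / (2*(x+1))) := by ring
              _ ≤ δ * (1/2) := mul_le_mul_of_nonneg_left h4 hδ.le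
              _ = δ/2 := by ring
          have h5 : |∑ j, (u' (ψ₂ m) j - u j) * z.2 j|
              ≤ (b:ℝ) * ‖u' (ψ₂ m) - u‖ * ((n:ℝ)+1) := by
            simpa [Pi.sub_apply] using h1
          linarith
        have hsplit : ∑ j, u' (ψ₂ m) j * z.2 j
            = ∑ j, u j * z.2 j + ∑ j, (u' (ψ₂ m) j - u j) * z.2 j := by
          rw [← Finset.sum_add_distrib]
          exact Finset.sum_congr rfl fun j _ => by ring
        have hdot' : δ/2 ≤ ∑ j, u' (ψ₂ m) j * z.2 j := by
          have h6 := abs_le.mp habs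
          rw [hsplit]
          linarith
        have hβw : v (ψ (ψ₂ m)) * (δ/2) ≤ ∑ j, β (ψ (ψ₂ m)) j * z.2 j := by
          have hrw : ∑ j, β (ψ (ψ₂ m)) j * z.2 j
              = v (ψ (ψ₂ m)) * ∑ j, u' (ψ₂ m) j * z.2 j := by
            rw [Finset.mul_sum]
            refine Finset.sum_congr rfl fun j _ => ?_
            simp only [hu'def]
            field_simp
            rw [mul_div_cancel_right₀ _ (hvpos (ψ₂ m)).ne']
          rw [hrw]
          exact mul_le_mul_of_nonneg_left hdot' (hvpos (ψ₂ m)).le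
        calc Real.exp (v (ψ (ψ₂ m)) * (δ/2)) * f z
            ≤ Real.exp (v (ψ (ψ₂ m)) * (δ/2)) * 1 :=
              mul_le_mul_of_nonneg_left (hf1 z) (Real.exp_pos _).le
          _ = Real.exp (v (ψ (ψ₂ m)) * (δ/2)) := mul_one _
          _ ≤ Real.exp (∑ j, β (ψ (ψ₂ m)) j * z.2 j) := Real.exp_le_exp.mpr hβw
          _ ≤ ℓstar z.1 * Real.exp (∑ j, β (ψ (ψ₂ m)) j * z.2 j) :=
              le_mul_of_one_le_left (Real.exp_pos _).le (hℓ1 _)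
    have hfmeas : Measurable (fun ω => f (T (φ (ψ (ψ₂ m))) ω, W (φ (ψ (ψ₂ m))) ω)) :=
      hfcont.measurable.comp (hTW _)
    have hchain : ENNReal.ofReal (Real.exp (v (ψ (ψ₂ m)) * (δ/2)) * (a'/2)) ≤ c := by
      calc ENNReal.ofReal (Real.exp (v (ψ (ψ₂ m)) * (δ/2)) * (a'/2))
          ≤ ENNReal.ofReal (Real.exp (v (ψ (ψ₂ m)) * (δ/2)) *
              ∫ ω, f (T (φ (ψ (ψ₂ m))) ω, W (φ (ψ (ψ₂ m))) ω) ∂(Ps (φ (ψ (ψ₂ m))))) :=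
            ENNReal.ofReal_le_ofReal (mul_le_mul_of_nonneg_left
              (hS₀ _ hsS₀).le (Real.exp_pos _).le)
        _ = ENNReal.ofReal (Real.exp (v (ψ (ψ₂ m)) * (δ/2))) *
              ENNReal.ofReal (∫ ω, f (T (φ (ψ (ψ₂ m))) ω, W (φ (ψ (ψ₂ m))) ω)
                ∂(Ps (φ (ψ (ψ₂ m))))) :=
            ENNReal.ofReal_mul (Real.exp_pos _).le
        _ = ENNReal.ofReal (Real.exp (v (ψ (ψ₂ m)) * (δ/2))) *
              ∫⁻ ω, ENNReal.ofReal (f (T (φ (ψ (ψ₂ m))) ω, W (φ (ψ (ψ₂ m))) ω))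
                ∂(Ps (φ (ψ (ψ₂ m)))) := by
            rw [lintegral_ofReal_eq (Ps (φ (ψ (ψ₂ m)))) hfmeas 1
              (fun ω => hf0 _) (fun ω => hf1 _)]
        _ = ∫⁻ ω, ENNReal.ofReal (Real.exp (v (ψ (ψ₂ m)) * (δ/2))) *
              ENNReal.ofReal (f (T (φ (ψ (ψ₂ m))) ω, W (φ (ψ (ψ₂ m))) ω))
                ∂(Ps (φ (ψ (ψ₂ m)))) :=
            (lintegral_const_mul _ hfmeas.ennreal_ofReal).symm
        _ ≤ ∫⁻ ω, ENNReal.ofReal (ℓstar (T (φ (ψ (ψ₂ m))) ω) *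
              Real.exp (∑ j, β (ψ (ψ₂ m)) j * W (φ (ψ (ψ₂ m))) ω j))
                ∂(Ps (φ (ψ (ψ₂ m)))) := by
            refine lintegral_mono fun ω => ?_
            rw [← ENNReal.ofReal_mul (Real.exp_pos _).le]
            exact ENNReal.ofReal_le_ofReal (hptwise _)
        _ ≤ c := (hβ (ψ (ψ₂ m))).le
    have hle : Real.exp (v (ψ (ψ₂ m)) * (δ/2)) * (a'/2) ≤ c.toReal := by
      rw [← ENNReal.ofReal_toReal hcne] at hchain
      exact (ENNReal.ofReal_le_ofReal_iff ENNReal.toReal_nonneg).mp hchain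
    have hge : c.toReal + 1 ≤ Real.exp (((m:ℝ)+1) * (δ/2)) * (a'/2) :=
      hM₂ m (le_max_right _ _)
    have hvm : ((m:ℝ)+1) ≤ v (ψ (ψ₂ m)) := by
      have h7 := hψv (ψ₂ m)
      have h8 : (m:ℝ) ≤ (ψ₂ m : ℝ) := Nat.cast_le.mpr hm1
      linarith
    have hmono2 : Real.exp (((m:ℝ)+1)*(δ/2)) ≤ Real.exp (v (ψ (ψ₂ m)) * (δ/2)) :=
      Real.exp_le_exp.mpr (mul_le_mul_of_nonneg_right hvm (by linarith))
    nlinarith [hle, hge, hmono2, ha']
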